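/- In a hedonic game satisfying bottom responsiveness, if π is an individually rational partition and a player i strictly improves by moving to a coalition S ∈ π ∪ {∅} with all members of S weakly approving, then the resulting partition π' is individually rational and satisfies π' >̇ π in the decreasing-size lexicographic order; consequently |S ∪ {i}| > |π(i)|. -/

import Mathlib

open Finset

abbrev Pref (N : Type*) := N → Finset N → Finset N → Prop

def SPref {N : Type*} (pref : Pref N) (i : N) (S T : Finset N) : Prop :=
  pref i S T ∧ ¬ pref i T S

def IsHedonic {N : Type*} (pref : Pref N) : Prop :=
  (∀ (i : N) (S T : Finset N), i ∈ S → i ∈ T → pref i S T ∨ pref i T S) ∧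
  (∀ (i : N) (S T U : Finset N), pref i S T → pref i T U → pref i S U)

section Defs

variable {N : Type*} [DecidableEq N] [Fintype N]

def IsPartition (π : N → Finset N) : Prop :=
  (∀ i, i ∈ π i) ∧ ∀ i j, j ∈ π i → π j = π i

def Reachable (π π' : N → Finset N) (H : Finset N) : Prop :=
  π' ≠ π ∧ ∀ i j, i ∉ H → j ∉ H → i ≠ j → (π i = π j ↔ π' i = π' j)

def WeaklyBlocks (pref : Pref N) (π : N → Finset N) (S : Finset N) : Prop :=
  (∀ i ∈ S, pref i S (π i)) ∧ ∃ j ∈ S, SPref pref j S (π j)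

def StrictCoreStable (pref : Pref N) (π : N → Finset N) : Prop :=
  ∀ S : Finset N, ¬ WeaklyBlocks pref π S

def Blocks (pref : Pref N) (π : N → Finset N) (S : Finset N) : Prop :=
  S.Nonempty ∧ ∀ i ∈ S, SPref pref i S (π i)

def CoreStable (pref : Pref N) (π : N → Finset N) : Prop :=
  ∀ S : Finset N, ¬ Blocks pref π S

def StrongNashBlocks (pref : Pref N) (π : N → Finset N) (H : Finset N) : Prop :=
  H.Nonempty ∧ ∃ π' : N → Finset N, IsPartition π' ∧ Reachable π π' H ∧
    ∀ i ∈ H, SPref pref i (π' i) (π i)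

def StrongNashStable (pref : Pref N) (π : N → Finset N) : Prop :=
  ∀ H : Finset N, ¬ StrongNashBlocks pref π H

def StronglyIndividuallyBlocks (pref : Pref N) (π : N → Finset N) (H : Finset N) : Prop :=
  H.Nonempty ∧ ∃ π' : N → Finset N, IsPartition π' ∧ Reachable π π' H ∧
    (∀ i ∈ H, SPref pref i (π' i) (π i)) ∧
    ∀ j : N, (∃ i ∈ H, j ∈ π' i) → pref j (π' j) (π j)

def StronglyIndividuallyStable (pref : Pref N) (π : N → Finset N) : Prop :=
  ∀ H : Finset N, ¬ StronglyIndividuallyBlocks pref π H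

def WeaklyNashBlocks (pref : Pref N) (π : N → Finset N) (H : Finset N) : Prop :=
  H.Nonempty ∧ ∃ π' : N → Finset N, IsPartition π' ∧ Reachable π π' H ∧
    (∀ i ∈ H, pref i (π' i) (π i)) ∧ ∃ i ∈ H, SPref pref i (π' i) (π i)

def StrictlyStrongNashStable (pref : Pref N) (π : N → Finset N) : Prop :=
  ∀ H : Finset N, ¬ WeaklyNashBlocks pref π H

def NashStable (pref : Pref N) (π : N → Finset N) : Prop :=
  ∀ (i : N) (T : Finset N), (T = ∅ ∨ ∃ j, π j = T) → i ∉ T →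
    ¬ SPref pref i (insert i T) (π i)

def IndividuallyStable (pref : Pref N) (π : N → Finset N) : Prop :=
  ∀ (i : N) (T : Finset N), (T = ∅ ∨ ∃ j, π j = T) → i ∉ T →
    ¬ (SPref pref i (insert i T) (π i) ∧ ∀ j ∈ T, pref j (insert i T) T)

def ParetoOptimal (pref : Pref N) (π : N → Finset N) : Prop :=
  ∀ π' : N → Finset N, IsPartition π' → (∀ j, pref j (π' j) (π j)) →
    ¬ ∃ i, SPref pref i (π' i) (π i)

def PerfectPartition (pref : Pref N) (π : N → Finset N) : Prop :=
  ∀ (i : N) (S : Finset N), i ∈ S → pref i (π i) S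

def ChoiceSets (pref : Pref N) (i : N) (X : Finset N) : Set (Finset N) :=
  {S' | S' ⊆ X ∧ i ∈ S' ∧ ∀ S'' ⊆ X, i ∈ S'' → pref i S' S''}

def TopResponsiveWith (pref : Pref N) (ch : N → Finset N → Finset N) : Prop :=
  (∀ (i : N) (X : Finset N), i ∈ X → ChoiceSets pref i X = {ch i X}) ∧
  (∀ (i : N) (X Y : Finset N), i ∈ X → i ∈ Y →
      SPref pref i (ch i X) (ch i Y) → SPref pref i X Y) ∧
  (∀ (i : N) (X Y : Finset N), i ∈ X → i ∈ Y →
      ch i X = ch i Y → X ⊂ Y → SPref pref i X Y)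

def MutualTop (ch : N → Finset N → Finset N) : Prop :=
  ∀ (i j : N) (X : Finset N), i ∈ X → j ∈ X → (i ∈ ch j X ↔ j ∈ ch i X)

def AvoidSets (pref : Pref N) (i : N) (X : Finset N) : Set (Finset N) :=
  {S' | S' ⊆ X ∧ i ∈ S' ∧ ∀ S'' ⊆ X, i ∈ S'' → pref i S'' S'}

def BottomResponsive (pref : Pref N) : Prop :=
  (∀ (i : N) (X Y : Finset N), i ∈ X → i ∈ Y →
      (∀ X' ∈ AvoidSets pref i X, ∀ Y' ∈ AvoidSets pref i Y, SPref pref i X' Y') →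
      SPref pref i X Y) ∧
  (∀ (i : N) (X Y : Finset N), i ∈ X → i ∈ Y →
      (AvoidSets pref i X ∩ AvoidSets pref i Y).Nonempty → Y.card ≤ X.card → pref i X Y)

def StrongBottomResponsiveWith (pref : Pref N) (av : N → Finset N → Finset N) : Prop :=
  BottomResponsive pref ∧
    ∀ (i : N) (X : Finset N), i ∈ X → AvoidSets pref i X = {av i X}

def MutualBottom (av : N → Finset N → Finset N) : Prop :=
  ∀ (i j : N) (X : Finset N), i ∈ X → j ∈ X → (i ∈ av j X ↔ j ∈ av i X)

end Defs

lemma exists_bot {α : Type*} (r : α → α → Prop) (s : Finset α)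
    (htrans : ∀ a b c, r a b → r b c → r a c) :
    s.Nonempty → (∀ a ∈ s, ∀ b ∈ s, r a b ∨ r b a) → ∃ w ∈ s, ∀ u ∈ s, r u w := by
  classical
  induction s using Finset.cons_induction with
  | empty => intro h; exact absurd h (by simp)
  | cons a t ha ih =>
    intro _ htot
    rcases t.eq_empty_or_nonempty with rfl | htne
    · refine ⟨a, by simp, ?_⟩
      intro u hu
      simp only [Finset.cons_empty, Finset.mem_singleton] at hu
      subst hu
      rcases htot u (by simp) u (by simp) with h | h <;> exact h
    · obtain ⟨w, hw, hwmin⟩ := ih htne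
        (fun x hx y hy => htot x (Finset.mem_cons_of_mem hx) y (Finset.mem_cons_of_mem hy))
      have hamem : a ∈ Finset.cons a t ha := Finset.mem_cons_self a t
      have hwmem : w ∈ Finset.cons a t ha := Finset.mem_cons_of_mem hw
      rcases htot a hamem w hwmem with haw | hwa
      · refine ⟨w, hwmem, ?_⟩
        intro u hu
        rcases Finset.mem_cons.mp hu with rfl | hu
        · exact haw
        · exact hwmin u hu
      · refine ⟨a, hamem, ?_⟩
        intro u hu
        rcases Finset.mem_cons.mp hu with rfl | hu
        · rcases htot u hamem u hamem with h | h <;> exact h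
        · exact htrans u w a (hwmin u hu) hwa

lemma avoid_nonempty {N : Type*} [DecidableEq N] [Fintype N] (pref : Pref N) (hG : IsHedonic pref) (j : N) (Y : Finset N) (hj : j ∈ Y) :
    ∃ W, W ∈ AvoidSets pref j Y := by
  classical
  obtain ⟨W, hWmem, hWmin⟩ := exists_bot (fun a b => pref j a b)
    ((Y.powerset).filter (fun T => j ∈ T))
    (fun a b c hab hbc => hG.2 j a b c hab hbc)
    ⟨Y, by simp [hj]⟩
    (fun a ha b hb => by
      simp only [Finset.mem_filter, Finset.mem_powerset] at ha hb
      exact (hG.1 j a b ha.2 hb.2))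
  refine ⟨W, ?_⟩
  simp only [Finset.mem_filter, Finset.mem_powerset] at hWmem
  exact ⟨hWmem.1, hWmem.2, fun S'' hsub hmem => hWmin S'' (by simp [Finset.mem_powerset, hsub, hmem])⟩

lemma keyAv {N : Type*} [DecidableEq N] [Fintype N] (pref : Pref N) (hG : IsHedonic pref) (hBR : BottomResponsive pref)
    (j : N) (X Y : Finset N) (hjX : j ∈ X) (hjY : j ∈ Y)
    (hX : ({j} : Finset N) ∈ AvoidSets pref j X) (hYX : pref j Y X) :
    ({j} : Finset N) ∈ AvoidSets pref j Y := by
  classical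
  obtain ⟨W, hW⟩ := avoid_nonempty pref hG j Y hjY
  obtain ⟨hWsub, hWmem, hWmin⟩ := hW
  by_cases hWj : pref j W ({j} : Finset N)
  · exact ⟨Finset.singleton_subset_iff.mpr hjY, Finset.mem_singleton_self j,
      fun S'' hsub hmem => hG.2 j S'' W {j} (hWmin S'' hsub hmem) hWj⟩
  · exfalso
    have hbr1 := hBR.1 j X Y hjX hjY ?_
    · exact absurd hYX hbr1.2
    · intro X' hX' Y' hY'
      obtain ⟨hX'sub, hX'mem, hX'min⟩ := hX'
      obtain ⟨hY'sub, hY'mem, hY'min⟩ := hY'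
      have hX'j : pref j X' ({j} : Finset N) := hX.2.2 X' hX'sub hX'mem
      have hjX' : pref j ({j} : Finset N) X' := hX'min {j}
        (Finset.singleton_subset_iff.mpr hjX) (Finset.mem_singleton_self j)
      have hjY' : pref j ({j} : Finset N) Y' := hY'min {j}
        (Finset.singleton_subset_iff.mpr hjY) (Finset.mem_singleton_self j)
      have hWY' : pref j W Y' := hY'min W hWsub hWmem
      refine ⟨hG.2 j X' {j} Y' hX'j hjY', ?_⟩
      intro hY'X'
      have : pref j Y' ({j} : Finset N) := hG.2 j Y' X' {j} hY'X' hX'j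
      exact hWj (hG.2 j W Y' {j} hWY' this)

lemma getD_sorted_ge_iff (l : List ℕ) (hl : l.Pairwise (fun a b => b ≤ a)) (m : ℕ) :
    ∀ j < l.length, (m ≤ l.getD j 0 ↔ j < l.countP (fun x => decide (m ≤ x))) := by
  induction l with
  | nil => intro j hj; simp at hj
  | cons a t ih =>
    have h1 : ∀ b ∈ t, b ≤ a := fun b hb => (List.pairwise_cons.mp hl).1 b hb
    have h2 : t.Pairwise (fun a b => b ≤ a) := (List.pairwise_cons.mp hl).2
    have hz : ¬ m ≤ a → t.countP (fun x => decide (m ≤ x)) = 0 := by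
      intro hma
      rw [List.countP_eq_zero]
      intro x hx
      simpa using fun h => hma (le_trans h (h1 x hx))
    intro j hj
    rcases j with _ | j
    · simp only [List.getD_cons_zero, List.countP_cons]
      by_cases hma : m ≤ a
      · simp [hma]
      · simp [hma, hz hma]
    · simp only [List.getD_cons_succ, List.countP_cons]
      by_cases hma : m ≤ a
      · rw [ih h2 j (by simpa using hj)]; simp [hma]
      · have hjt : j < t.length := by simpa using hj
        have hmem : t.getD j 0 ∈ t := by
          rw [List.getD_eq_getElem t 0 hjt]; exact List.getElem_mem _
        simp only [hma, decide_eq_true_eq, hz hma]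
        constructor
        · intro h
          exact absurd (le_trans h (h1 _ hmem)) hma
        · simp


/-- Sizes of the coalitions of a coalition structure, sorted in decreasing order. -/
def sizes {N : Type*} (P : Finset (Finset N)) : List ℕ :=
  (Multiset.sort (α := ℕ) (P.val.map Finset.card) (· ≤ ·)).reverse

/-- Lexicographic comparison of (decreasingly sorted) size vectors: the paper's `>̇`. -/
def GdotL (l1 l2 : List ℕ) : Prop :=
  ∃ i : ℕ, i < l1.length ∧ i < l2.length ∧ l2.getD i 0 < l1.getD i 0 ∧
    ∀ j < i, l1.getD j 0 = l2.getD j 0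

def Gdot {N : Type*} (P Q : Finset (Finset N)) : Prop := GdotL (sizes P) (sizes Q)

/-- The paper's `≐`: same number of coalitions with equal sorted size vectors. -/
def Doteq {N : Type*} (P Q : Finset (Finset N)) : Prop := sizes P = sizes Q

/-- The paper's `≥̇`. -/
def Gdoteq {N : Type*} (P Q : Finset (Finset N)) : Prop := Gdot P Q ∨ Doteq P Q

def IsPartitionSet {N : Type*} [DecidableEq N] [Fintype N] (P : Finset (Finset N)) : Prop :=
  (∀ S ∈ P, S.Nonempty) ∧ (∀ S ∈ P, ∀ T ∈ P, S ≠ T → Disjoint S T) ∧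
    P.biUnion id = Finset.univ

lemma gdot_step (A B : Multiset ℕ) (v : ℕ)
    (hB : B.filter (fun x => v < x) = (v+1) ::ₘ A.filter (fun x => v < x))
    (hA : ∃ x ∈ A, x ≤ v) :
    GdotL ((Multiset.sort B (· ≤ ·)).reverse) ((Multiset.sort A (· ≤ ·)).reverse) := by
  classical
  set la := (Multiset.sort A (· ≤ ·)).reverse with hla
  set lb := (Multiset.sort B (· ≤ ·)).reverse with hlb
  have hsa : la.Pairwise (fun a b => b ≤ a) := by
    rw [hla]
    exact List.pairwise_reverse.mpr (Multiset.pairwise_sort _ _)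
  have hsb : lb.Pairwise (fun a b => b ≤ a) := by
    rw [hlb]
    exact List.pairwise_reverse.mpr (Multiset.pairwise_sort _ _)
  have hcoea : (la : Multiset ℕ) = A := by
    rw [hla, Multiset.coe_reverse, Multiset.sort_eq]
  have hcoeb : (lb : Multiset ℕ) = B := by
    rw [hlb, Multiset.coe_reverse, Multiset.sort_eq]
  have hlena : la.length = Multiset.card A := by
    rw [← hcoea]; rfl
  have hlenb : lb.length = Multiset.card B := by
    rw [← hcoeb]; rfl
  -- counts
  have hca : ∀ m, la.countP (fun x => decide (m ≤ x)) = Multiset.countP (fun x => m ≤ x) A := by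
    intro m; rw [← hcoea, Multiset.coe_countP]
  have hcb : ∀ m, lb.countP (fun x => decide (m ≤ x)) = Multiset.countP (fun x => m ≤ x) B := by
    intro m; rw [← hcoeb, Multiset.coe_countP]
  -- count relationship
  have key : ∀ m, v + 1 ≤ m → Multiset.countP (fun x => m ≤ x) B
      = Multiset.countP (fun x => m ≤ x) A + (if m ≤ v + 1 then 1 else 0) := by
    intro m hm
    have e1 : ∀ (X : Multiset ℕ), Multiset.countP (fun x => m ≤ x) X
        = Multiset.countP (fun x => m ≤ x) (X.filter (fun x => v < x)) := by
      intro X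
      rw [Multiset.countP_filter]
      refine Multiset.countP_congr rfl ?_ |>.symm
      intro x _
      simp only [eq_iff_iff]
      constructor
      · rintro ⟨h1, _⟩; exact h1
      · intro h1; exact ⟨h1, lt_of_lt_of_le (Nat.lt_succ_self v) (le_trans hm h1)⟩
    rw [e1 B, hB, Multiset.countP_cons, e1 A]
  set k := Multiset.countP (fun x => v + 1 ≤ x) A with hk
  have hkB : Multiset.countP (fun x => v + 1 ≤ x) B = k + 1 := by
    have := key (v+1) le_rfl; rw [if_pos le_rfl] at this; omega
  have hkb : k < lb.length := by
    rw [hlenb]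
    calc k < k + 1 := Nat.lt_succ_self k
      _ = Multiset.countP (fun x => v + 1 ≤ x) B := hkB.symm
      _ ≤ Multiset.card B := Multiset.countP_le_card _ _
  have hka : k < la.length := by
    rw [hlena]
    obtain ⟨x, hxA, hxv⟩ := hA
    have : Multiset.countP (fun x => v + 1 ≤ x) A < Multiset.card A := by
      rw [Multiset.countP_eq_card_filter]
      have hsub : A.filter (fun x => v + 1 ≤ x) ≤ A := Multiset.filter_le _ _
      have hx : x ∉ A.filter (fun x => v + 1 ≤ x) := by
        simp only [Multiset.mem_filter]; omega
      by_contra hcon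
      push_neg at hcon
      have := Multiset.eq_of_le_of_card_le hsub hcon
      rw [this] at hx; exact hx hxA
    exact this
  refine ⟨k, hkb, hka, ?_, ?_⟩
  · -- la.getD k 0 < lb.getD k 0
    have h1 : v + 1 ≤ lb.getD k 0 := by
      rw [getD_sorted_ge_iff lb hsb (v+1) k hkb, hcb, hkB]; omega
    have h2 : ¬ (v + 1 ≤ la.getD k 0) := by
      rw [getD_sorted_ge_iff la hsa (v+1) k hka, hca, ← hk]; omega
    omega
  · intro j hj
    have hja : j < la.length := lt_trans hj hka
    have hjb : j < lb.length := lt_trans hj hkb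
    have hle : ∀ m, m ≤ la.getD j 0 ↔ m ≤ lb.getD j 0 := by
      intro m
      rw [getD_sorted_ge_iff la hsa m j hja, getD_sorted_ge_iff lb hsb m j hjb, hca, hcb]
      by_cases hm : v + 1 ≤ m
      · rw [key m hm]
        by_cases h2 : m ≤ v + 1
        · have hmv : m = v + 1 := le_antisymm h2 hm
          subst hmv
          rw [← hk]
          omega
        · simp [h2]
      · push_neg at hm
        have hmono : ∀ (X : Multiset ℕ), Multiset.countP (fun x => v + 1 ≤ x) X
            ≤ Multiset.countP (fun x => m ≤ x) X := by
          intro X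
          rw [Multiset.countP_eq_card_filter, Multiset.countP_eq_card_filter]
          exact Multiset.card_le_card (Multiset.monotone_filter_right X (fun x hx => by omega))
        have l1 : j < Multiset.countP (fun x => m ≤ x) A := by
          have := hmono A; omega
        have l2 : j < Multiset.countP (fun x => m ≤ x) B := by
          have := hmono B; rw [hkB] at this; omega
        simp [l1, l2]
    have := (hle (lb.getD j 0)).mpr le_rfl
    have := (hle (la.getD j 0)).mp le_rfl
    omega

/-- In a bottom responsive hedonic game, if `π` is individually rational (in the
strengthened sense that `{j}` is an avoid set of `π(j)` for every `j`) and player `i`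
strictly improves by moving to a coalition `S ∈ π ∪ {∅}` with all members of `S` weakly
approving, then the resulting partition `π'` is individually rational and `π' >̇ π`;
consequently `|S ∪ {i}| > |π(i)|`. -/
theorem bottomResponsive_deviation_increases {N : Type*} [DecidableEq N] [Fintype N]
    (pref : Pref N) (hG : IsHedonic pref) (hBR : BottomResponsive pref)
    (π : N → Finset N) (hπ : IsPartition π)
    (hIR : ∀ j : N, ({j} : Finset N) ∈ AvoidSets pref j (π j))
    (i : N) (S : Finset N) (hS : S = ∅ ∨ ∃ j, π j = S) (hiS : i ∉ S)
    (himp : SPref pref i (insert i S) (π i))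
    (happ : ∀ j ∈ S, pref j (insert i S) S)
    (π' : N → Finset N)
    (hπ'def : π' = fun j => if j ∈ insert i S then insert i S else (π j).erase i) :
    (∀ j : N, ({j} : Finset N) ∈ AvoidSets pref j (π' j)) ∧
    Gdot (Finset.univ.image π') (Finset.univ.image π) ∧
    (π i).card < (insert i S).card := by
    classical
  -- `{i}` is a worst set of `insert i S`
  have hiAv : ({i} : Finset N) ∈ AvoidSets pref i (insert i S) :=
    keyAv pref hG hBR i (π i) (insert i S) (hπ.1 i) (Finset.mem_insert_self i S)
      (hIR i) himp.1
  -- the size increases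
  have hcard : (π i).card < (insert i S).card := by
    by_contra hc
    push_neg at hc
    exact himp.2 (hBR.2 i (π i) (insert i S) (hπ.1 i) (Finset.mem_insert_self i S)
      ⟨{i}, hIR i, hiAv⟩ hc)
  have hScard : (insert i S).card = S.card + 1 := Finset.card_insert_of_notMem hiS
  have hπile : (π i).card ≤ S.card := by omega
  -- `S` is an existing (nonempty) coalition
  obtain ⟨j₀, hj₀⟩ : ∃ j, π j = S := by
    rcases hS with rfl | h
    · exfalso
      have h1 : 0 < (π i).card := Finset.card_pos.mpr ⟨i, hπ.1 i⟩
      simp only [Finset.card_empty] at hπile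
      omega
    · exact h
  have hπS : ∀ j ∈ S, π j = S := by
    intro j hj
    rw [← hj₀] at hj ⊢
    exact hπ.2 j₀ j hj
  have hmemπ : ∀ j, i ∈ π j → π i = π j := fun j hj => hπ.2 j i hj
  -- `insert i S` is not an old coalition
  have hnew : ∀ j, π j ≠ insert i S := by
    intro j hj
    have hi : i ∈ π j := hj ▸ Finset.mem_insert_self i S
    have h1 : π i = insert i S := (hmemπ j hi).trans hj
    have h2 : j₀ ∈ π i := by
      rw [h1]
      exact Finset.mem_insert_of_mem (hj₀ ▸ hπ.1 j₀)
    have h3 : π j₀ = π i := hπ.2 i j₀ h2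
    rw [hj₀, h1] at h3
    exact hiS (h3 ▸ Finset.mem_insert_self i S)
  -- individual rationality of `π'`
  have hIR' : ∀ j : N, ({j} : Finset N) ∈ AvoidSets pref j (π' j) := by
    intro j
    by_cases hj : j ∈ insert i S
    · have hval : π' j = insert i S := by rw [hπ'def]; simp [hj]
      rw [hval]
      rcases Finset.mem_insert.mp hj with rfl | hjS
      · exact hiAv
      · refine keyAv pref hG hBR j S (insert i S) hjS hj ?_ (happ j hjS)
        rw [← hπS j hjS]
        exact hIR j
    · have hval : π' j = (π j).erase i := by rw [hπ'def]; simp [hj]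
      rw [hval]
      have hji : j ≠ i := fun h => hj (h ▸ Finset.mem_insert_self i S)
      have hjmem : j ∈ (π j).erase i := Finset.mem_erase.mpr ⟨hji, hπ.1 j⟩
      obtain ⟨h1, h2, h3⟩ := hIR j
      exact ⟨Finset.singleton_subset_iff.mpr hjmem, Finset.mem_singleton_self j,
        fun S'' hsub hmem => h3 S'' (hsub.trans (Finset.erase_subset _ _)) hmem⟩
  refine ⟨hIR', ?_, hcard⟩
  -- the coalitions of size greater than `|S|`
  have hE : (Finset.univ.image π').filter (fun T => S.card < T.card)
      = insert (insert i S) ((Finset.univ.image π).filter (fun T => S.card < T.card)) := by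
    ext T
    simp only [Finset.mem_filter, Finset.mem_insert, Finset.mem_image, Finset.mem_univ,
      true_and]
    constructor
    · rintro ⟨⟨j, rfl⟩, hT⟩
      by_cases hj : j ∈ insert i S
      · left; rw [hπ'def]; simp [hj]
      · have hval : π' j = (π j).erase i := by rw [hπ'def]; simp [hj]
        rw [hval] at hT ⊢
        by_cases hi : i ∈ π j
        · exfalso
          have h1 : π i = π j := hmemπ j hi
          have h2 : ((π j).erase i).card = (π j).card - 1 := Finset.card_erase_of_mem hi
          have h3 : (π j).card ≤ S.card := h1 ▸ hπile
          omega
        · rw [Finset.erase_eq_of_notMem hi] at hT ⊢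
          exact Or.inr ⟨⟨j, rfl⟩, hT⟩
    · rintro (rfl | ⟨⟨j, rfl⟩, hT⟩)
      · refine ⟨⟨i, ?_⟩, by rw [hScard]; omega⟩
        rw [hπ'def]; simp
      · have hji : j ∉ insert i S := by
          intro hj
          rcases Finset.mem_insert.mp hj with rfl | hjS
          · omega
          · rw [hπS j hjS] at hT; omega
        have hi : i ∉ π j := by
          intro hi
          have h1 : π i = π j := hmemπ j hi
          rw [← h1] at hT
          omega
        refine ⟨⟨j, ?_⟩, hT⟩
        rw [hπ'def]
        simp only []
        rw [if_neg hji, Finset.erase_eq_of_notMem hi]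
  have hnotmem : insert i S ∉ (Finset.univ.image π).filter (fun T => S.card < T.card) := by
    simp only [Finset.mem_filter, Finset.mem_image, Finset.mem_univ, true_and, not_and]
    rintro ⟨j, hj⟩
    exact absurd hj (hnew j)
  have hBmul : ((Finset.univ.image π').val.map Finset.card).filter (fun x => S.card < x)
      = (S.card + 1) ::ₘ
        ((Finset.univ.image π).val.map Finset.card).filter (fun x => S.card < x) := by
    rw [Multiset.filter_map, Multiset.filter_map]
    have h1 : ∀ (P : Finset (Finset N)),
        P.val.filter ((fun x => S.card < x) ∘ Finset.card)
          = (P.filter (fun T => S.card < T.card)).val := by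
      intro P
      rw [Finset.filter_val]
      rfl
    rw [h1, h1, hE, Finset.insert_val_of_notMem hnotmem, Multiset.map_cons, hScard]
  have hAxe : ∃ x ∈ (Finset.univ.image π).val.map Finset.card, x ≤ S.card := by
    refine ⟨(π i).card, Multiset.mem_map.mpr ⟨π i, ?_, rfl⟩, hπile⟩
    rw [← Finset.mem_def]
    exact Finset.mem_image.mpr ⟨i, Finset.mem_univ i, rfl⟩
  exact gdot_step _ _ _ hBmul hAxe
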